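/- Let A, B, G ∈ R[x_1,…,x_n] and assume the following five identity families (all sums over ν ∈ {1,…,n}): (Ic) for all i,j,k,l: Σ_ν Δ_ν(∂_i∂_j∂_ν A)(∂_ν∂_k∂_l A) = Σ_ν Δ_ν(∂_j∂_k∂_ν A)(∂_ν∂_i∂_l A); (Ib) the same with B in place of A; (Ia) for all i,j,k,l: Σ_ν Δ_ν[(∂_i∂_j∂_ν A)(∂_ν∂_k∂_l B) + (∂_i∂_j∂_ν B)(∂_ν∂_k∂_l A)] = Σ_ν Δ_ν[(∂_j∂_k∂_ν A)(∂_ν∂_i∂_l B) + (∂_j∂_k∂_ν B)(∂_ν∂_i∂_l A)]; (IIa) for all i,j,k: Σ_ν Δ_ν(∂_i∂_j∂_ν A)(∂_ν∂_k G) = Σ_ν Δ_ν(∂_j∂_k∂_ν A)(∂_ν∂_i G); (IIb) the same with B in place of A. Regard A, B, G as elements of S' = R[x_1,…,x_n,x_o] (independent of x_o) and define the vector potential F = (F^1,…,F^n,F^o) by F^i := Δ_i·∂_i(A+B) for i = 1,…,n and F^o := G. Then F satisfies the open WDVV equations in all n+1 indices: for all i,j,k,l ∈ {1,…,n,o}, Σ_{μ∈{1,…,n,o}}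 (∂_i∂_μ F^j)(∂_k∂_l F^μ) = Σ_{μ∈{1,…,n,o}} (∂_k∂_μ F^j)(∂_i∂_l F^μ). -/

import Mathlib

open MvPolynomial

/-- Second partial derivative `∂ᵢ∂ⱼ F` of a multivariate polynomial. -/
noncomputable def D2 {R : Type*} [CommRing R] {m : ℕ} (F : MvPolynomial (Fin m) R)
    (i j : Fin m) : MvPolynomial (Fin m) R :=
  pderiv i (pderiv j F)

/-- Third partial derivative `∂ᵢ∂ⱼ∂ₖ F` of a multivariate polynomial. -/
noncomputable def D3 {R : Type*} [CommRing R] {m : ℕ} (F : MvPolynomial (Fin m) R)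
    (i j k : Fin m) : MvPolynomial (Fin m) R :=
  pderiv i (pderiv j (pderiv k F))

/-- The open WDVV equations for a vector potential `F`. -/
noncomputable def OpenWDVV {R : Type*} [CommRing R] {n : ℕ}
    (F : Fin n → MvPolynomial (Fin n) R) : Prop :=
  ∀ i j k l : Fin n,
    ∑ μ, D2 (F j) i μ * D2 (F μ) k l = ∑ μ, D2 (F j) k μ * D2 (F μ) i l

lemma my_pderiv_comm {R : Type*} [CommRing R] {σ : Type*} (i j : σ)
    (f : MvPolynomial σ R) : pderiv i (pderiv j f) = pderiv j (pderiv i f) := by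
  classical
  induction f using MvPolynomial.induction_on with
  | C a => simp
  | add p q hp hq => simp [hp, hq]
  | mul_X p k hp =>
      simp only [pderiv_mul, map_add, pderiv_X, hp, Pi.single_apply]
      split_ifs <;> simp <;> ring

lemma my_pderiv_last {R : Type*} [CommRing R] {n : ℕ} (P : MvPolynomial (Fin n) R) :
    pderiv (Fin.last n) (rename Fin.castSucc P) = 0 := by
  apply pderiv_eq_zero_of_notMem_vars
  intro h
  obtain ⟨x, -, hx⟩ := mem_vars_rename _ _ h
  exact (Fin.castSucc_lt_last x).ne hx

lemma D2_symm {R : Type*} [CommRing R] {m : ℕ} (F : MvPolynomial (Fin m) R)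
    (i j : Fin m) : D2 F i j = D2 F j i := my_pderiv_comm i j F

lemma D3_swap12 {R : Type*} [CommRing R] {m : ℕ} (F : MvPolynomial (Fin m) R)
    (a b c : Fin m) : D3 F a b c = D3 F b a c := my_pderiv_comm a b _

lemma D3_swap23 {R : Type*} [CommRing R] {m : ℕ} (F : MvPolynomial (Fin m) R)
    (a b c : Fin m) : D3 F a b c = D3 F a c b :=
  congrArg (pderiv a) (my_pderiv_comm b c F)

lemma D3_cycle {R : Type*} [CommRing R] {m : ℕ} (F : MvPolynomial (Fin m) R)
    (a b c : Fin m) : D3 F a b c = D3 F b c a := by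
  rw [D3_swap12, D3_swap23]

lemma D2_rename {R : Type*} [CommRing R] {n : ℕ} (P : MvPolynomial (Fin n) R)
    (a b : Fin n) :
    D2 (rename (Fin.castSucc : Fin n → Fin (n+1)) P) a.castSucc b.castSucc =
      rename Fin.castSucc (D2 P a b) := by
  unfold D2
  rw [pderiv_rename (Fin.castSucc_injective n), pderiv_rename (Fin.castSucc_injective n)]

lemma D2_rename_last_right {R : Type*} [CommRing R] {n : ℕ} (P : MvPolynomial (Fin n) R)
    (a : Fin (n+1)) :
    D2 (rename (Fin.castSucc : Fin n → Fin (n+1)) P) a (Fin.last n) = 0 := by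
  unfold D2; rw [my_pderiv_last]; simp

lemma D2_rename_last_left {R : Type*} [CommRing R] {n : ℕ} (P : MvPolynomial (Fin n) R)
    (a : Fin (n+1)) :
    D2 (rename (Fin.castSucc : Fin n → Fin (n+1)) P) (Fin.last n) a = 0 := by
  rw [D2_symm, D2_rename_last_right]

theorem openWDVV_of_open_closed_identities {R : Type*} [CommRing R] {n : ℕ}
    (Δ : Fin n → Rˣ) (A B G : MvPolynomial (Fin n) R)
    -- (Ic)
    (hIc : ∀ i j k l : Fin n,
        ∑ ν, C (Δ ν : R) * D3 A i j ν * D3 A ν k l =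
        ∑ ν, C (Δ ν : R) * D3 A j k ν * D3 A ν i l)
    -- (Ib)
    (hIb : ∀ i j k l : Fin n,
        ∑ ν, C (Δ ν : R) * D3 B i j ν * D3 B ν k l =
        ∑ ν, C (Δ ν : R) * D3 B j k ν * D3 B ν i l)
    -- (Ia)
    (hIa : ∀ i j k l : Fin n,
        ∑ ν, C (Δ ν : R) * (D3 A i j ν * D3 B ν k l + D3 B i j ν * D3 A ν k l) =
        ∑ ν, C (Δ ν : R) * (D3 A j k ν * D3 B ν i l + D3 B j k ν * D3 A ν i l))
    -- (IIa)
    (hIIa : ∀ i j k : Fin n,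
        ∑ ν, C (Δ ν : R) * D3 A i j ν * pderiv ν (pderiv k G) =
        ∑ ν, C (Δ ν : R) * D3 A j k ν * pderiv ν (pderiv i G))
    -- (IIb)
    (hIIb : ∀ i j k : Fin n,
        ∑ ν, C (Δ ν : R) * D3 B i j ν * pderiv ν (pderiv k G) =
        ∑ ν, C (Δ ν : R) * D3 B j k ν * pderiv ν (pderiv i G)) :
    OpenWDVV ((Fin.snoc
      (fun i => rename Fin.castSucc (C (Δ i : R) * pderiv i (A + B)))
      (rename Fin.castSucc G) : Fin (n + 1) → MvPolynomial (Fin (n + 1)) R)) := by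
  set S := A + B with hS_def
  -- closed WDVV for S
  have hSd : ∀ x y z : Fin n, D3 S x y z = D3 A x y z + D3 B x y z := by
    intro x y z; simp [D3, hS_def]
  have hS : ∀ i j k l : Fin n,
      ∑ ν, C (Δ ν : R) * D3 S i j ν * D3 S ν k l =
      ∑ ν, C (Δ ν : R) * D3 S j k ν * D3 S ν i l := by
    intro i j k l
    have expand : ∀ a b c d : Fin n,
        ∑ ν, C (Δ ν : R) * D3 S a b ν * D3 S ν c d =
          (∑ ν, C (Δ ν : R) * D3 A a b ν * D3 A ν c d) +
          ((∑ ν, C (Δ ν : R) * (D3 A a b ν * D3 B ν c d + D3 B a b ν * D3 A ν c d)) +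
           (∑ ν, C (Δ ν : R) * D3 B a b ν * D3 B ν c d)) := by
      intro a b c d
      rw [← Finset.sum_add_distrib, ← Finset.sum_add_distrib]
      refine Finset.sum_congr rfl fun ν _ => ?_
      rw [hSd, hSd]; ring
    rw [expand, expand, hIc, hIa, hIb]
  -- mixed identity for S and G
  have hG : ∀ i j k : Fin n,
      ∑ ν, C (Δ ν : R) * D3 S i j ν * pderiv ν (pderiv k G) =
      ∑ ν, C (Δ ν : R) * D3 S j k ν * pderiv ν (pderiv i G) := by
    intro i j k
    have expand : ∀ a b c : Fin n,
        ∑ ν, C (Δ ν : R) * D3 S a b ν * pderiv ν (pderiv c G) =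
          (∑ ν, C (Δ ν : R) * D3 A a b ν * pderiv ν (pderiv c G)) +
          (∑ ν, C (Δ ν : R) * D3 B a b ν * pderiv ν (pderiv c G)) := by
      intro a b c
      rw [← Finset.sum_add_distrib]
      refine Finset.sum_congr rfl fun ν _ => ?_
      rw [hSd]; ring
    rw [expand, expand, hIIa, hIIb]
  set F : Fin (n + 1) → MvPolynomial (Fin (n + 1)) R :=
    (Fin.snoc (fun i => rename Fin.castSucc (C (Δ i : R) * pderiv i (A + B)))
      (rename Fin.castSucc G)) with hF_def
  have hFrange : ∀ μ : Fin (n+1), ∃ P : MvPolynomial (Fin n) R,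
      F μ = rename Fin.castSucc P := by
    intro μ
    refine Fin.lastCases ?_ ?_ μ
    · exact ⟨G, by rw [hF_def]; exact Fin.snoc_last _ _⟩
    · intro i
      exact ⟨C (Δ i : R) * pderiv i (A + B), by rw [hF_def]; exact Fin.snoc_castSucc _ _ i⟩
  have z1 : ∀ (μ : Fin (n+1)) (a : Fin (n+1)), D2 (F μ) a (Fin.last n) = 0 := by
    intro μ a; obtain ⟨P, hP⟩ := hFrange μ; rw [hP, D2_rename_last_right]
  have z2 : ∀ (μ : Fin (n+1)) (a : Fin (n+1)), D2 (F μ) (Fin.last n) a = 0 := by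
    intro μ a; obtain ⟨P, hP⟩ := hFrange μ; rw [hP, D2_rename_last_left]
  have hFc : ∀ i : Fin n, F i.castSucc =
      rename Fin.castSucc (C (Δ i : R) * pderiv i S) := by
    intro i; simp [hF_def, hS_def]
  have hFl : F (Fin.last n) = rename Fin.castSucc G := by simp [hF_def]
  intro i j k l
  -- kill the cases where i, k, or l is last
  refine Fin.lastCases ?_ ?_ i
  · simp only [z1, z2, zero_mul, mul_zero, Finset.sum_const_zero]
  intro i'
  refine Fin.lastCases ?_ ?_ k
  · simp only [z1, z2, zero_mul, mul_zero, Finset.sum_const_zero]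
  intro k'
  refine Fin.lastCases ?_ ?_ l
  · simp only [z1, z2, zero_mul, mul_zero, Finset.sum_const_zero]
  intro l'
  -- key computation of D2 of the components at castSucc indices
  have hD2c : ∀ (ν a b : Fin n), D2 (F ν.castSucc) a.castSucc b.castSucc =
      rename Fin.castSucc (C (Δ ν : R) * D3 S a b ν) := by
    intro ν a b
    rw [hFc, D2_rename]
    congr 1
    unfold D2 D3
    rw [pderiv_C_mul, pderiv_C_mul]
  have hD2l : ∀ (a b : Fin n), D2 (F (Fin.last n)) a.castSucc b.castSucc =
      rename Fin.castSucc (D2 G a b) := by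
    intro a b; rw [hFl, D2_rename]
  -- now split on j
  refine Fin.lastCases ?_ ?_ j
  · -- j = last
    rw [Fin.sum_univ_castSucc, Fin.sum_univ_castSucc, z1, z1, zero_mul, zero_mul,
      add_zero, add_zero]
    have : ∀ ν : Fin n,
        D2 (F (Fin.last n)) i'.castSucc ν.castSucc * D2 (F ν.castSucc) k'.castSucc l'.castSucc
        = rename Fin.castSucc (D2 G i' ν * (C (Δ ν : R) * D3 S k' l' ν)) := by
      intro ν; rw [hD2l, hD2c, ← map_mul]
    simp only [this]
    have that : ∀ ν : Fin n,
        D2 (F (Fin.last n)) k'.castSucc ν.castSucc * D2 (F ν.castSucc) i'.castSucc l'.castSucc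
        = rename Fin.castSucc (D2 G k' ν * (C (Δ ν : R) * D3 S i' l' ν)) := by
      intro ν; rw [hD2l, hD2c, ← map_mul]
    simp only [that]
    rw [← map_sum, ← map_sum]
    refine congrArg (rename Fin.castSucc) ?_
    have key := hG k' l' i'
    calc ∑ ν, D2 G i' ν * (C (Δ ν : R) * D3 S k' l' ν)
        = ∑ ν, C (Δ ν : R) * D3 S k' l' ν * pderiv ν (pderiv i' G) := by
          refine Finset.sum_congr rfl fun ν _ => ?_
          rw [D2_symm]; unfold D2; ring
      _ = ∑ ν, C (Δ ν : R) * D3 S l' i' ν * pderiv ν (pderiv k' G) := key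
      _ = ∑ ν, D2 G k' ν * (C (Δ ν : R) * D3 S i' l' ν) := by
          refine Finset.sum_congr rfl fun ν _ => ?_
          rw [D3_swap12, D2_symm]; unfold D2; ring
  · -- j = castSucc j'
    intro j'
    rw [Fin.sum_univ_castSucc, Fin.sum_univ_castSucc, z1, z1, zero_mul, zero_mul,
      add_zero, add_zero]
    have this1 : ∀ ν : Fin n,
        D2 (F j'.castSucc) i'.castSucc ν.castSucc * D2 (F ν.castSucc) k'.castSucc l'.castSucc
        = rename Fin.castSucc
            (C (Δ j' : R) * D3 S i' ν j' * (C (Δ ν : R) * D3 S k' l' ν)) := by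
      intro ν; rw [hD2c, hD2c, ← map_mul]
    have this2 : ∀ ν : Fin n,
        D2 (F j'.castSucc) k'.castSucc ν.castSucc * D2 (F ν.castSucc) i'.castSucc l'.castSucc
        = rename Fin.castSucc
            (C (Δ j' : R) * D3 S k' ν j' * (C (Δ ν : R) * D3 S i' l' ν)) := by
      intro ν; rw [hD2c, hD2c, ← map_mul]
    simp only [this1, this2]
    rw [← map_sum, ← map_sum]
    refine congrArg (rename Fin.castSucc) ?_
    have key := hS i' j' k' l'
    calc ∑ ν, C (Δ j' : R) * D3 S i' ν j' * (C (Δ ν : R) * D3 S k' l' ν)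
        = C (Δ j' : R) * ∑ ν, C (Δ ν : R) * D3 S i' j' ν * D3 S ν k' l' := by
          rw [Finset.mul_sum]
          refine Finset.sum_congr rfl fun ν _ => ?_
          rw [D3_swap23 S i' ν j', D3_cycle S ν k' l']
          ring
      _ = C (Δ j' : R) * ∑ ν, C (Δ ν : R) * D3 S j' k' ν * D3 S ν i' l' := by rw [key]
      _ = ∑ ν, C (Δ j' : R) * D3 S k' ν j' * (C (Δ ν : R) * D3 S i' l' ν) := by
          rw [Finset.mul_sum]
          refine Finset.sum_congr rfl fun ν _ => ?_
          rw [D3_swap23 S k' ν j', D3_swap12 S k' j' ν, D3_cycle S ν i' l']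
          ring
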